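/- For every integer p ≥ 1, T_p = (−1)^p · [ 2·Σ_{m=1}^{⌊p/2⌋} binom(2p−2m−1, p−1)·ζ(2m) − binom(2p−1, p−1) ], where ζ denotes the Riemann zeta function. -/

import Mathlib

open Real

/-- `T p = Σ_{n=1}^∞ 1/(n^p (n+1)^p)`. -/
noncomputable def T (p : ℕ) : ℝ := ∑' n : ℕ, 1 / (((n : ℝ) + 1) ^ p * ((n : ℝ) + 2) ^ p)

open Finset

noncomputable def Pc (q : ℕ) (t : ℝ) : ℝ :=
  ∑ j ∈ Finset.range (q + 1), ((q + j).choose q : ℝ) * (-t) ^ j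

noncomputable def Fc (q : ℕ) (t : ℝ) : ℝ := (1 + t) ^ (q + 1) * Pc q t

lemma Pc_rec (q : ℕ) (t : ℝ) :
    (1 + t) * Pc (q + 1) t - Pc q t
      = (-1) ^ (q + 1) * ((2 * q + 1).choose (q + 1) : ℝ) * t ^ (q + 1) * (1 + 2 * t) := by
  have hPascal : ∀ j : ℕ, ((q + 1 + j).choose (q + 1) : ℝ)
      = ((q + j).choose q : ℝ) + ((q + j).choose (q + 1) : ℝ) := by
    intro j
    have : (q + 1 + j).choose (q + 1) = (q + j).choose q + (q + j).choose (q + 1) := by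
      rw [show q + 1 + j = q + j + 1 by ring]
      exact Nat.choose_succ_succ (q + j) q
    exact_mod_cast congrArg (fun n : ℕ => (n : ℝ)) this
  have h1 : Pc (q + 1) t
      = Pc q t + ((2 * q + 1).choose q : ℝ) * (-t) ^ (q + 1)
        + ∑ j ∈ Finset.range (q + 2), ((q + j).choose (q + 1) : ℝ) * (-t) ^ j := by
    unfold Pc
    rw [Finset.sum_congr rfl (fun j _ => by rw [hPascal j, add_mul])]
    rw [Finset.sum_add_distrib, Finset.sum_range_succ _ (q + 1)]
    rw [show q + (q + 1) = 2 * q + 1 by ring]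
  have h2 : t * Pc (q + 1) t
      = -(∑ j ∈ Finset.range (q + 2), ((q + j).choose (q + 1) : ℝ) * (-t) ^ j)
        - ((2 * q + 2).choose (q + 1) : ℝ) * (-t) ^ (q + 2) := by
    have e1 : t * Pc (q + 1) t
        = -∑ j ∈ Finset.range (q + 2), ((q + (j + 1)).choose (q + 1) : ℝ) * (-t) ^ (j + 1) := by
      unfold Pc
      rw [Finset.mul_sum, ← Finset.sum_neg_distrib]
      refine Finset.sum_congr rfl fun j _ => ?_
      rw [show q + 1 + j = q + (j + 1) by ring]
      ring
    have e2 : ∑ j ∈ Finset.range (q + 3), ((q + j).choose (q + 1) : ℝ) * (-t) ^ j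
        = (∑ j ∈ Finset.range (q + 2), ((q + (j + 1)).choose (q + 1) : ℝ) * (-t) ^ (j + 1))
          + ((q + 0).choose (q + 1) : ℝ) * (-t) ^ 0 :=
      Finset.sum_range_succ' _ (q + 2)
    have e3 : ∑ j ∈ Finset.range (q + 3), ((q + j).choose (q + 1) : ℝ) * (-t) ^ j
        = (∑ j ∈ Finset.range (q + 2), ((q + j).choose (q + 1) : ℝ) * (-t) ^ j)
          + ((2 * q + 2).choose (q + 1) : ℝ) * (-t) ^ (q + 2) := by
      rw [Finset.sum_range_succ _ (q + 2), show q + (q + 2) = 2 * q + 2 by ring]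
    have h0 : ((q + 0).choose (q + 1) : ℝ) = 0 := by
      simp [Nat.choose_eq_zero_of_lt]
    rw [h0] at e2
    rw [e1]
    have key : (∑ j ∈ Finset.range (q + 2), ((q + (j + 1)).choose (q + 1) : ℝ) * (-t) ^ (j + 1))
        = (∑ j ∈ Finset.range (q + 2), ((q + j).choose (q + 1) : ℝ) * (-t) ^ j)
          + ((2 * q + 2).choose (q + 1) : ℝ) * (-t) ^ (q + 2) := by
      linarith [e2, e3]
    rw [key]
    ring
  have hsym : ((2 * q + 1).choose q : ℝ) = ((2 * q + 1).choose (q + 1) : ℝ) := by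
    have h := Nat.choose_symm (show q + 1 ≤ 2 * q + 1 by omega)
    rw [show 2 * q + 1 - (q + 1) = q from by omega] at h
    exact_mod_cast h
  have hdbl : ((2 * q + 2).choose (q + 1) : ℝ) = 2 * ((2 * q + 1).choose (q + 1) : ℝ) := by
    have : (2 * q + 2).choose (q + 1) = (2 * q + 1).choose q + (2 * q + 1).choose (q + 1) := by
      rw [show 2 * q + 2 = (2 * q + 1) + 1 by ring]
      exact Nat.choose_succ_succ (2 * q + 1) q
    rw [this]
    push_cast
    rw [hsym]
    ring
  have : (1 + t) * Pc (q + 1) t - Pc q t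
      = ((2 * q + 1).choose q : ℝ) * (-t) ^ (q + 1)
        - ((2 * q + 2).choose (q + 1) : ℝ) * (-t) ^ (q + 2) := by
    rw [add_mul, one_mul, h2, h1]
    ring
  rw [this, hsym, hdbl, neg_pow, neg_pow, pow_succ, pow_succ]
  ring

lemma Fc_rec (q : ℕ) (t : ℝ) :
    Fc (q + 1) t = Fc q t
      + (-1) ^ (q + 1) * ((2 * q + 1).choose (q + 1) : ℝ)
        * (t * (1 + t)) ^ (q + 1) * (1 + 2 * t) := by
  have h := Pc_rec q t
  have : (1 + t) * Pc (q + 1) t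
      = Pc q t + (-1) ^ (q + 1) * ((2 * q + 1).choose (q + 1) : ℝ) * t ^ (q + 1) * (1 + 2 * t) := by
    linarith
  unfold Fc
  calc (1 + t) ^ (q + 1 + 1) * Pc (q + 1) t
      = (1 + t) ^ (q + 1) * ((1 + t) * Pc (q + 1) t) := by ring
    _ = (1 + t) ^ (q + 1) * (Pc q t
          + (-1) ^ (q + 1) * ((2 * q + 1).choose (q + 1) : ℝ) * t ^ (q + 1) * (1 + 2 * t)) := by
        rw [this]
    _ = _ := by rw [mul_pow]; ring

lemma Fc_add (q : ℕ) (t : ℝ) : Fc q t + Fc q (-1 - t) = 1 := by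
  induction q with
  | zero => simp [Fc, Pc]; ring
  | succ q ih =>
    rw [Fc_rec q t, Fc_rec q (-1 - t)]
    have e1 : ((-1 - t) * (1 + (-1 - t))) ^ (q + 1) = (t * (1 + t)) ^ (q + 1) := by
      congr 1; ring
    rw [e1]
    have : (1 + 2 * t) + (1 + 2 * (-1 - t)) = 0 := by ring
    nlinarith [ih, this]

lemma decomp (q n : ℕ) :
    1 / (((n : ℝ) + 1) ^ (q + 1) * ((n : ℝ) + 2) ^ (q + 1))
      = ∑ j ∈ Finset.range (q + 1), ((q + j).choose q : ℝ) *
          ((-1) ^ j / ((n : ℝ) + 1) ^ (q + 1 - j)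
            + (-1) ^ (q + 1) / ((n : ℝ) + 2) ^ (q + 1 - j)) := by
  set u : ℝ := (n : ℝ) + 1 with hu_def
  have hu : (0:ℝ) < u := by positivity
  have hv : (0:ℝ) < u + 1 := by positivity
  have hn2 : ((n:ℝ) + 2) = u + 1 := by rw [hu_def]; ring
  rw [hn2]
  have key : (∑ j ∈ Finset.range (q + 1), ((q + j).choose q : ℝ) *
        ((-1) ^ j / u ^ (q + 1 - j) + (-1) ^ (q + 1) / (u + 1) ^ (q + 1 - j)))
        * (u ^ (q + 1) * (u + 1) ^ (q + 1)) = 1 := by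
    rw [Finset.sum_mul]
    have step : ∀ j ∈ Finset.range (q + 1), ((q + j).choose q : ℝ) *
        ((-1) ^ j / u ^ (q + 1 - j) + (-1) ^ (q + 1) / (u + 1) ^ (q + 1 - j))
          * (u ^ (q + 1) * (u + 1) ^ (q + 1))
        = ((q + j).choose q : ℝ) *
            ((-1) ^ j * u ^ j * (u + 1) ^ (q + 1)
              + (-1) ^ (q + 1) * u ^ (q + 1) * (u + 1) ^ j) := by
      intro j hj
      have hj' : j ≤ q := by simpa [Nat.lt_succ_iff] using Finset.mem_range.mp hj
      have e1 : u ^ (q + 1) = u ^ (q + 1 - j) * u ^ j := by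
        rw [← pow_add]; congr 1; omega
      have e2 : (u + 1) ^ (q + 1) = (u + 1) ^ (q + 1 - j) * (u + 1) ^ j := by
        rw [← pow_add]; congr 1; omega
      have n1 : u ^ (q + 1 - j) ≠ 0 := by positivity
      have n2 : (u + 1) ^ (q + 1 - j) ≠ 0 := by positivity
      rw [e1, e2]
      field_simp
    rw [Finset.sum_congr rfl step]
    have eF : ∑ j ∈ Finset.range (q + 1), ((q + j).choose q : ℝ) *
          ((-1) ^ j * u ^ j * (u + 1) ^ (q + 1)
            + (-1) ^ (q + 1) * u ^ (q + 1) * (u + 1) ^ j)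
        = Fc q u + Fc q (-1 - u) := by
      rw [Fc, Fc, Pc, Pc, Finset.mul_sum, Finset.mul_sum, ← Finset.sum_add_distrib]
      refine Finset.sum_congr rfl fun j hj => ?_
      have r1 : (1 + (-1 - u)) = -u := by ring
      have r2 : (-(-1 - u)) = u + 1 := by ring
      rw [r1, r2, neg_pow u, neg_pow u]
      ring
    rw [eF, Fc_add]
  have hne : u ^ (q + 1) * (u + 1) ^ (q + 1) ≠ 0 := by positivity
  rw [div_eq_iff hne]
  exact key.symm

noncomputable def Z (k : ℕ) : ℝ := ∑' n : ℕ, 1 / ((n : ℝ) + 1) ^ k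

lemma summable_Z (k : ℕ) (hk : 2 ≤ k) : Summable (fun n : ℕ => 1 / ((n : ℝ) + 1) ^ k) := by
  have h := (summable_nat_add_iff 1).mpr (Real.summable_one_div_nat_pow.mpr hk)
  refine h.congr fun n => ?_
  push_cast
  norm_num

lemma summable_Z2 (k : ℕ) (hk : 2 ≤ k) : Summable (fun n : ℕ => 1 / ((n : ℝ) + 2) ^ k) := by
  have h := (summable_nat_add_iff 2).mpr (Real.summable_one_div_nat_pow.mpr hk)
  refine h.congr fun n => ?_
  push_cast
  norm_num

lemma tsum_Z2 (k : ℕ) (hk : 2 ≤ k) : ∑' n : ℕ, 1 / ((n : ℝ) + 2) ^ k = Z k - 1 := by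
  have h := Summable.tsum_eq_zero_add (summable_Z k hk)
  have h2 : ∑' b : ℕ, 1 / (((b + 1 : ℕ) : ℝ) + 1) ^ k = ∑' b : ℕ, 1 / ((b : ℝ) + 2) ^ k := by
    refine tsum_congr fun b => ?_
    push_cast
    ring_nf
  rw [h2] at h
  have h0 : 1 / (((0 : ℕ) : ℝ) + 1) ^ k = 1 := by norm_num
  rw [h0] at h
  have : Z k = 1 + ∑' b : ℕ, 1 / ((b : ℝ) + 2) ^ k := h
  linarith

lemma hasSum_tel : HasSum (fun n : ℕ => 1 / (((n : ℝ) + 1) * ((n : ℝ) + 2))) 1 := by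
  rw [hasSum_iff_tendsto_nat_of_nonneg (fun i => by positivity)]
  have hps : ∀ N : ℕ, ∑ i ∈ Finset.range N, 1 / (((i : ℝ) + 1) * ((i : ℝ) + 2))
      = 1 - 1 / ((N : ℝ) + 1) := by
    intro N
    induction N with
    | zero => simp
    | succ N ih =>
      rw [Finset.sum_range_succ, ih]
      have h1 : ((N : ℝ) + 1) ≠ 0 := by positivity
      have h2 : ((N : ℝ) + 2) ≠ 0 := by positivity
      push_cast
      field_simp
      ring
  simp only [hps]
  simpa using (tendsto_const_nhds (x := (1:ℝ))).sub (tendsto_one_div_add_atTop_nhds_zero_nat : Filter.Tendsto (fun n : ℕ => 1 / ((n : ℝ) + 1)) Filter.atTop (nhds 0))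

lemma T_real (q : ℕ) :
    T (q + 1) = (-1 : ℝ) ^ (q + 1) *
      (2 * ∑ m ∈ Finset.Icc 1 ((q + 1) / 2),
          ((2 * q + 1 - 2 * m).choose q : ℝ) * Z (2 * m)
        - ((2 * q + 1).choose q : ℝ)) := by
  classical
  set g : ℕ → ℕ → ℝ := fun j n => ((q + j).choose q : ℝ) *
      ((-1) ^ j / ((n : ℝ) + 1) ^ (q + 1 - j) + (-1) ^ (q + 1) / ((n : ℝ) + 2) ^ (q + 1 - j))
    with hg
  have hgq : ∀ n : ℕ, g q n
      = ((q + q).choose q : ℝ) * (-1) ^ q * (1 / (((n : ℝ) + 1) * ((n : ℝ) + 2))) := by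
    intro n
    rw [hg]
    simp only [show q + 1 - q = 1 by omega, pow_one]
    have h1 : ((n : ℝ) + 1) ≠ 0 := by positivity
    have h2 : ((n : ℝ) + 2) ≠ 0 := by positivity
    have key : (-1 : ℝ) ^ q / ((n : ℝ) + 1) + (-1) ^ (q + 1) / ((n : ℝ) + 2)
        = (-1) ^ q * (1 / (((n : ℝ) + 1) * ((n : ℝ) + 2))) := by
      rw [pow_succ]
      field_simp
      ring
    rw [key]
    ring
  have hsum : ∀ j ∈ Finset.range (q + 1), Summable (g j) := by
    intro j hj
    by_cases hjq : j = q
    · refine ((hasSum_tel.summable.mul_left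
        (((q + q).choose q : ℝ) * (-1) ^ q)).congr fun n => ?_)
      rw [hjq, hgq n]
    · have hjlt : j < q := by
        have := Finset.mem_range.mp hj; omega
      have hk : 2 ≤ q + 1 - j := by omega
      refine (((((summable_Z _ hk).mul_left ((-1 : ℝ) ^ j)).add
        ((summable_Z2 _ hk).mul_left ((-1 : ℝ) ^ (q + 1)))).mul_left
          ((q + j).choose q : ℝ)).congr fun n => ?_)
      rw [hg]
      ring
  have hT : T (q + 1) = ∑ j ∈ Finset.range (q + 1), ∑' n, g j n := by
    rw [T, ← Summable.tsum_finsetSum hsum]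
    exact tsum_congr fun n => by rw [decomp q n]
  have htq : ∑' n, g q n = ((q + q).choose q : ℝ) * (-1) ^ q := by
    calc ∑' n, g q n
        = ∑' n : ℕ, ((q + q).choose q : ℝ) * (-1) ^ q
            * (1 / (((n : ℝ) + 1) * ((n : ℝ) + 2))) := tsum_congr fun n => hgq n
      _ = ((q + q).choose q : ℝ) * (-1) ^ q := by
          rw [tsum_mul_left, hasSum_tel.tsum_eq, mul_one]
  have htj : ∀ j ∈ Finset.range q, ∑' n, g j n
      = ((q + j).choose q : ℝ) * (((-1) ^ j + (-1) ^ (q + 1)) * Z (q + 1 - j) - (-1) ^ (q + 1)) := by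
    intro j hj
    have hjlt : j < q := Finset.mem_range.mp hj
    have hk : 2 ≤ q + 1 - j := by omega
    calc ∑' n, g j n
        = ∑' n : ℕ, (((q + j).choose q : ℝ) * (-1) ^ j * (1 / ((n : ℝ) + 1) ^ (q + 1 - j))
            + ((q + j).choose q : ℝ) * (-1) ^ (q + 1) * (1 / ((n : ℝ) + 2) ^ (q + 1 - j))) := by
          refine tsum_congr fun n => ?_
          rw [hg]; ring
      _ = ((q + j).choose q : ℝ) * (-1) ^ j * Z (q + 1 - j)
            + ((q + j).choose q : ℝ) * (-1) ^ (q + 1) * (Z (q + 1 - j) - 1) := by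
          rw [Summable.tsum_add ((summable_Z _ hk).mul_left _) ((summable_Z2 _ hk).mul_left _),
            tsum_mul_left, tsum_mul_left, tsum_Z2 _ hk, Z]
      _ = _ := by ring
  rw [hT, Finset.sum_range_succ, htq, Finset.sum_congr rfl htj]
  -- split the sum into a zeta part and a constant part
  have e1 : ∀ j ∈ Finset.range q,
      ((q + j).choose q : ℝ) * (((-1) ^ j + (-1) ^ (q + 1)) * Z (q + 1 - j) - (-1) ^ (q + 1))
      = ((q + j).choose q : ℝ) * (((-1) ^ j + (-1) ^ (q + 1)) * Z (q + 1 - j))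
        - (-1) ^ (q + 1) * ((q + j).choose q : ℝ) := fun j _ => by ring
  rw [Finset.sum_congr rfl e1, Finset.sum_sub_distrib, ← Finset.mul_sum]
  -- hockey stick
  have hock : ∑ j ∈ Finset.range (q + 1), ((q + j).choose q : ℝ) = ((2 * q + 1).choose q : ℝ) := by
    have h1 : ∑ j ∈ Finset.range (q + 1), (q + j).choose q
        = ∑ j ∈ Finset.range (q + 1), (j + q).choose q :=
      Finset.sum_congr rfl fun j _ => by rw [Nat.add_comm]
    have h2 := Nat.sum_range_add_choose q q
    have h := Nat.choose_symm (show q + 1 ≤ 2 * q + 1 by omega)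
    rw [show 2 * q + 1 - (q + 1) = q from by omega] at h
    have h3 : (q + q + 1).choose (q + 1) = (2 * q + 1).choose q := by
      rw [show q + q + 1 = 2 * q + 1 from by omega]
      exact h.symm ▸ rfl
    exact_mod_cast h1.trans (h2.trans h3)
  have hsplit : ∑ j ∈ Finset.range q, ((q + j).choose q : ℝ)
      = ((2 * q + 1).choose q : ℝ) - ((q + q).choose q : ℝ) := by
    have := Finset.sum_range_succ (fun j => ((q + j).choose q : ℝ)) q
    rw [← hock, this]
    ring
  -- the zeta part
  have hzeta : ∑ j ∈ Finset.range q,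
      ((q + j).choose q : ℝ) * (((-1) ^ j + (-1) ^ (q + 1)) * Z (q + 1 - j))
      = 2 * (-1) ^ (q + 1)
        * ∑ m ∈ Finset.Icc 1 ((q + 1) / 2), ((2 * q + 1 - 2 * m).choose q : ℝ) * Z (2 * m) := by
    have hfil : ∑ j ∈ Finset.range q,
        ((q + j).choose q : ℝ) * (((-1) ^ j + (-1) ^ (q + 1)) * Z (q + 1 - j))
        = ∑ j ∈ (Finset.range q).filter (fun j => Even (q + 1 - j)),
            ((q + j).choose q : ℝ) * (((-1) ^ j + (-1) ^ (q + 1)) * Z (q + 1 - j)) := by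
      refine (Finset.sum_filter_of_ne fun j hj hne => ?_).symm
      by_contra hodd
      apply hne
      have hjq : j < q := Finset.mem_range.mp hj
      have hodd' : Odd (q + 1 - j) := Nat.odd_iff.mpr (by
        rcases Nat.even_or_odd (q + 1 - j) with h | h
        · exact absurd h hodd
        · exact Nat.odd_iff.mp h)
      have hsplitpow : (-1 : ℝ) ^ (q + 1) = (-1) ^ j * (-1) ^ (q + 1 - j) := by
        rw [← pow_add]
        congr 1
        omega
      rw [hsplitpow, hodd'.neg_one_pow]
      ring
    rw [hfil, Finset.mul_sum]
    refine Finset.sum_nbij' (i := fun j => (q + 1 - j) / 2) (j := fun m => q + 1 - 2 * m)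
      ?_ ?_ ?_ ?_ ?_
    · intro j hj
      simp only [Finset.mem_filter, Finset.mem_range] at hj
      obtain ⟨hjq, c, hc⟩ := hj
      simp only [Finset.mem_Icc]
      constructor
      · omega
      · apply Nat.div_le_div_right
        omega
    · intro m hm
      simp only [Finset.mem_Icc] at hm
      obtain ⟨h1m, h2m⟩ := hm
      have h2m' : 2 * m ≤ q + 1 := by
        have := Nat.div_mul_le_self (q + 1) 2
        omega
      simp only [Finset.mem_filter, Finset.mem_range]
      exact ⟨by omega, ⟨m, by omega⟩⟩
    · intro j hj
      simp only [Finset.mem_filter, Finset.mem_range] at hj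
      obtain ⟨hjq, c, hc⟩ := hj
      show q + 1 - 2 * ((q + 1 - j) / 2) = j
      omega
    · intro m hm
      simp only [Finset.mem_Icc] at hm
      obtain ⟨h1m, h2m⟩ := hm
      have h2m' : 2 * m ≤ q + 1 := by
        have := Nat.div_mul_le_self (q + 1) 2
        omega
      show (q + 1 - (q + 1 - 2 * m)) / 2 = m
      omega
    · intro j hj
      simp only [Finset.mem_filter, Finset.mem_range] at hj
      obtain ⟨hjq, c, hc⟩ := hj
      show _ = 2 * (-1) ^ (q + 1) *
        (((2 * q + 1 - 2 * ((q + 1 - j) / 2)).choose q : ℝ) * Z (2 * ((q + 1 - j) / 2)))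
      have h2 : 2 * ((q + 1 - j) / 2) = q + 1 - j := by omega
      rw [h2, show 2 * q + 1 - (q + 1 - j) = q + j from by omega]
      have hpow : (-1 : ℝ) ^ j = (-1) ^ (q + 1) := by
        have hsplitpow : (-1 : ℝ) ^ (q + 1) = (-1) ^ j * (-1) ^ (q + 1 - j) := by
          rw [← pow_add]; congr 1; omega
        have : ((-1 : ℝ)) ^ (q + 1 - j) = 1 := Even.neg_one_pow ⟨c, by omega⟩
        rw [hsplitpow, this, mul_one]
      rw [hpow]
      ring
  rw [hzeta, hsplit]
  ring

lemma Z_eq_zeta (k : ℕ) (hk : 2 ≤ k) : (Z k : ℂ) = riemannZeta k := by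
  rw [zeta_nat_eq_tsum_of_gt_one (show 1 < k by omega), Z, Complex.ofReal_tsum]
  have hs : Summable (fun n : ℕ => 1 / (n : ℂ) ^ k) := by
    apply Summable.of_norm
    refine (Real.summable_one_div_nat_pow.mpr hk).congr fun n => ?_
    simp [norm_div, norm_pow]
  rw [Summable.tsum_eq_zero_add hs]
  rw [Nat.cast_zero, zero_pow (show k ≠ 0 by omega), div_zero, zero_add]
  exact tsum_congr fun n => by push_cast; ring

theorem T_eq_zeta_combination (p : ℕ) (hp : 1 ≤ p) :
    (T p : ℂ) = (-1 : ℂ) ^ p *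
      (2 * ∑ m ∈ Finset.Icc 1 (p / 2),
          (Nat.choose (2 * p - 2 * m - 1) (p - 1) : ℂ) * riemannZeta (2 * m)
        - (Nat.choose (2 * p - 1) (p - 1) : ℂ)) := by
  obtain ⟨q, rfl⟩ : ∃ q, p = q + 1 := ⟨p - 1, by omega⟩
  rw [T_real q]
  simp only [Nat.add_sub_cancel]
  rw [show (2 * (q + 1) - 1) = 2 * q + 1 from by omega]
  have hstep : ∑ m ∈ Finset.Icc 1 ((q + 1) / 2),
        ((2 * (q + 1) - 2 * m - 1).choose q : ℂ) * riemannZeta (2 * m)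
      = ∑ m ∈ Finset.Icc 1 ((q + 1) / 2),
          ((((2 * q + 1 - 2 * m).choose q : ℝ) * Z (2 * m) : ℝ) : ℂ) := by
    refine Finset.sum_congr rfl fun m hm => ?_
    simp only [Finset.mem_Icc] at hm
    have h2m' : 2 * m ≤ q + 1 := by
      have := Nat.div_mul_le_self (q + 1) 2
      omega
    rw [show 2 * (q + 1) - 2 * m - 1 = 2 * q + 1 - 2 * m from by omega,
      show (2 * (m : ℂ)) = ((2 * m : ℕ) : ℂ) from by push_cast; ring,
      ← Z_eq_zeta (2 * m) (by omega)]
    push_cast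
    ring
  rw [hstep, ← Complex.ofReal_sum]
  push_cast
  ring
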